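/- Full-dimension equivalence of the spectra: for every set F ⊆ ℝ^d and every θ ∈ (0,1), the upper spectrum satisfies \overline{dim}_A^θ F = d if and only if the Assouad spectrum satisfies dim_A^θ F = d. -/

import Mathlib

open Filter Metric Set Topology Bornology ENNReal

noncomputable section

variable {X : Type*} [PseudoMetricSpace X]

/-- `coveringNumber r E` is the smallest number of closed balls of radius `r`
needed to cover `E` (with value `⊤` if no finite cover exists). -/
def coveringNumber (r : ℝ) (E : Set X) : ℕ∞ :=
  sInf {n : ℕ∞ | ∃ t : Finset X, (E ⊆ ⋃ x ∈ t, closedBall x r) ∧ (t.card : ℕ∞) = n}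

/-- The Assouad spectrum `dim_A^θ F`. -/
def assouadSpectrum (θ : ℝ) (F : Set X) : ℝ :=
  sInf {s : ℝ | 0 ≤ s ∧ ∃ C > (0 : ℝ), ∀ R : ℝ, 0 < R → R < 1 → ∀ x ∈ F,
    (coveringNumber (R ^ (1 / θ)) (closedBall x R ∩ F) : ℝ≥0∞)
      ≤ ENNReal.ofReal (C * (R / R ^ (1 / θ)) ^ s)}

/-- The upper spectrum `\overline{dim}_A^θ F`. -/
def upperSpectrum (θ : ℝ) (F : Set X) : ℝ :=
  sInf {s : ℝ | 0 ≤ s ∧ ∃ C > (0 : ℝ), ∀ r R : ℝ, 0 < r → r ≤ R ^ (1 / θ) →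
    R ^ (1 / θ) < R → R < 1 → 0 < R → ∀ x ∈ F,
    (coveringNumber r (closedBall x R ∩ F) : ℝ≥0∞) ≤ ENNReal.ofReal (C * (R / r) ^ s)}

/-- The generalized upper box dimension `\overline{dim}_{GB} F := limsup_{θ → 0⁺} dim_A^θ F`. -/
def genUpperBoxDim (F : Set X) : ℝ :=
  limsup (fun θ : ℝ => assouadSpectrum θ F) (𝓝[>] (0 : ℝ))

/-- The quasi-Assouad dimension `dim_{qA} F := lim_{θ → 1⁻} \overline{dim}_A^θ F`
(the limit exists by monotonicity, hence equals the limsup). -/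
def quasiAssouadDim (F : Set X) : ℝ :=
  limsup (fun θ : ℝ => upperSpectrum θ F) (𝓝[<] (1 : ℝ))

/-- The upper box dimension `\overline{dim}_B F := limsup_{δ → 0⁺} log N_δ(F) / (- log δ)`. -/
def upperBoxDim (F : Set X) : ℝ :=
  limsup (fun δ : ℝ => Real.log ((coveringNumber δ F).toNat : ℝ) / (- Real.log δ))
    (𝓝[>] (0 : ℝ))

/-- The Assouad dimension `dim_A F`. -/
def assouadDim (F : Set X) : ℝ :=
  sInf {s : ℝ | 0 ≤ s ∧ ∃ C > (0 : ℝ), ∃ ρ > (0 : ℝ), ∀ r R : ℝ, 0 < r → r < R → R < ρ →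
    ∀ x ∈ F, (coveringNumber r (closedBall x R ∩ F) : ℝ≥0∞) ≤ ENNReal.ofReal (C * (R / r) ^ s)}

/-- The packing pre-measure at scale `δ`: the supremum of `∑ |B_i|^s` over at most countable
collections of disjoint closed balls of radii at most `δ` (and positive) with centres in `F`,
where `|B_i| = 2 r_i` is the diameter. -/
def packingPre (s δ : ℝ) (F : Set X) : ℝ≥0∞ :=
  ⨆ (D : Set (X × ℝ)) (_ : D.Countable)
    (_ : ∀ p ∈ D, p.1 ∈ F ∧ 0 < p.2 ∧ p.2 ≤ δ)
    (_ : D.Pairwise fun p q => Disjoint (closedBall p.1 p.2) (closedBall q.1 q.2)),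
    ∑' p : D, ENNReal.ofReal ((2 * (p : X × ℝ).2) ^ s)

/-- `𝒫₀^s(F) := lim_{δ → 0} 𝒫_δ^s(F)`; the limit exists by monotonicity and equals the inf. -/
def packingPre₀ (s : ℝ) (F : Set X) : ℝ≥0∞ :=
  ⨅ (δ : ℝ) (_ : 0 < δ), packingPre s δ F

/-- The packing (outer) measure `𝒫^s(F)`. -/
def packingMeasure (s : ℝ) (F : Set X) : ℝ≥0∞ :=
  ⨅ (G : ℕ → Set X) (_ : F ⊆ ⋃ i, G i), ∑' i, packingPre₀ s (G i)

/-- The packing dimension `dim_P F = inf {s ≥ 0 : 𝒫^s(F) = 0}`. -/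
def packingDim (F : Set X) : ℝ :=
  sInf {s : ℝ | 0 ≤ s ∧ packingMeasure s F = 0}


section AuxCov

variable {r ρ : ℝ} {E E' : Set X}

lemma coveringNumber_le_card {t : Finset X} (h : E ⊆ ⋃ x ∈ t, closedBall x r) :
    coveringNumber r E ≤ t.card :=
  sInf_le ⟨t, h, rfl⟩

lemma exists_cover_of_coveringNumber_le {n : ℕ} (h : coveringNumber r E ≤ (n : ℕ∞)) :
    ∃ t : Finset X, (E ⊆ ⋃ x ∈ t, closedBall x r) ∧ t.card ≤ n := by
  by_contra hc
  push_neg at hc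
  have h2 : ((n : ℕ∞) + 1) ≤ coveringNumber r E := by
    apply le_sInf
    rintro m ⟨t, ht, rfl⟩
    have h3 : ((n : ℕ∞)) < (t.card : ℕ∞) := by exact_mod_cast hc t ht
    exact (ENat.add_one_le_iff (by simp)).2 h3
  have h4 := h2.trans h
  have h5 : ((n : ℕ∞)) < (n : ℕ∞) + 1 :=
    (ENat.lt_add_one_iff (by simp)).2 le_rfl
  exact absurd (h5.trans_le h4) (lt_irrefl _)

lemma coveringNumber_mono_set (h : E ⊆ E') : coveringNumber r E ≤ coveringNumber r E' := by
  apply sInf_le_sInf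
  rintro m ⟨t, ht, rfl⟩
  exact ⟨t, h.trans ht, rfl⟩

lemma coveringNumber_mono_radius (hrρ : r ≤ ρ) : coveringNumber ρ E ≤ coveringNumber r E := by
  apply sInf_le_sInf
  rintro m ⟨t, ht, rfl⟩
  refine ⟨t, ht.trans ?_, rfl⟩
  exact Set.iUnion₂_mono fun x _ => closedBall_subset_closedBall hrρ

/-- Extraction with a real bound. -/
lemma exists_cover_of_le_ofReal {b : ℝ} (hb : 0 ≤ b)
    (h : (coveringNumber r E : ℝ≥0∞) ≤ ENNReal.ofReal b) :
    ∃ t : Finset X, (E ⊆ ⋃ x ∈ t, closedBall x r) ∧ (t.card : ℝ) ≤ b := by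
  have hlt0 : ENNReal.ofReal b < ENNReal.ofReal ((⌊b⌋₊ : ℝ) + 1) :=
    (ENNReal.ofReal_lt_ofReal_iff_of_nonneg hb).2 (Nat.lt_floor_add_one b)
  have he : ENNReal.ofReal ((⌊b⌋₊ : ℝ) + 1) = (((⌊b⌋₊ + 1 : ℕ) : ℕ∞) : ℝ≥0∞) := by
    rw [ENat.toENNReal_coe]
    push_cast
    rw [ENNReal.ofReal_add (by positivity) zero_le_one]
    simp [ENNReal.ofReal_natCast]
  have hlt : (coveringNumber r E : ℝ≥0∞) < (((⌊b⌋₊ + 1 : ℕ) : ℕ∞) : ℝ≥0∞) :=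
    (h.trans_lt hlt0).trans_le (le_of_eq he)
  have hle : coveringNumber r E ≤ (⌊b⌋₊ : ℕ∞) := by
    have h6 := ENat.toENNReal_lt.1 hlt
    have h7 : ((⌊b⌋₊ + 1 : ℕ) : ℕ∞) = (⌊b⌋₊ : ℕ∞) + 1 := by push_cast; rfl
    rw [h7] at h6
    exact (ENat.lt_add_one_iff (by simp)).1 h6
  obtain ⟨t, ht, hc⟩ := exists_cover_of_coveringNumber_le hle
  exact ⟨t, ht, le_trans (by exact_mod_cast hc) (Nat.floor_le hb)⟩

/-- Converse direction: a finset cover with real card bound gives the ENNReal bound. -/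
lemma coveringNumber_le_ofReal {b : ℝ} {t : Finset X}
    (h : E ⊆ ⋃ x ∈ t, closedBall x r) (hb : (t.card : ℝ) ≤ b) :
    (coveringNumber r E : ℝ≥0∞) ≤ ENNReal.ofReal b := by
  calc (coveringNumber r E : ℝ≥0∞) ≤ ((t.card : ℕ∞) : ℝ≥0∞) :=
        ENat.toENNReal_le.2 (coveringNumber_le_card h)
    _ = ENNReal.ofReal (t.card : ℝ) := by
        rw [ENat.toENNReal_coe]; simp [ENNReal.ofReal_natCast]
    _ ≤ _ := ENNReal.ofReal_le_ofReal hb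

end AuxCov
section AuxCover

lemma recenter_cover {t : Finset X} {E F : Set X} {ρ : ℝ}
    (h : E ⊆ ⋃ x ∈ t, closedBall x ρ) (hEF : E ⊆ F) :
    ∃ t' : Finset X, ↑t' ⊆ F ∧ t'.card ≤ t.card ∧ E ⊆ ⋃ x ∈ t', closedBall x (2 * ρ) := by
  classical
  set P : X → Prop := fun y => (closedBall y ρ ∩ E).Nonempty with hP
  set g : X → X := fun y => if h : P y then h.choose else y with hgdef
  have hg : ∀ y, P y → g y ∈ closedBall y ρ ∩ E := by
    intro y hy
    simp only [hgdef, dif_pos hy]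
    exact hy.choose_spec
  refine ⟨(t.filter P).image g, ?_, ?_, ?_⟩
  · intro z hz
    simp only [Finset.coe_image, Set.mem_image, Finset.mem_coe, Finset.mem_filter] at hz
    obtain ⟨y, ⟨-, hyP⟩, rfl⟩ := hz
    exact hEF (hg y hyP).2
  · exact (Finset.card_image_le).trans (Finset.card_filter_le _ _)
  · intro e he
    obtain ⟨y, hyt, hey⟩ := Set.mem_iUnion₂.1 (h he)
    have hPy : P y := ⟨e, hey, he⟩
    refine Set.mem_iUnion₂.2 ⟨g y, ?_, ?_⟩
    · exact Finset.mem_image.2 ⟨y, Finset.mem_filter.2 ⟨hyt, hPy⟩, rfl⟩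
    · have h1 : dist e y ≤ ρ := mem_closedBall.1 hey
      have h2 : dist (g y) y ≤ ρ := mem_closedBall.1 (hg y hPy).1
      have := dist_triangle e y (g y)
      rw [mem_closedBall]
      calc dist e (g y) ≤ dist e y + dist y (g y) := dist_triangle _ _ _
        _ ≤ ρ + ρ := by rw [dist_comm y (g y)]; exact add_le_add h1 h2
        _ = 2 * ρ := by ring

lemma exists_cover_biUnion {S : Set X} {t : Finset X} {G : X → Set X} {F : Set X}
    (hc : S ⊆ ⋃ z ∈ t, G z) (tz : X → Finset X) {r b : ℝ}
    (hcov : ∀ z ∈ t, G z ∩ S ⊆ ⋃ w ∈ tz z, closedBall w r)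
    (hb : ∀ z ∈ t, ((tz z).card : ℝ) ≤ b)
    (hF : ∀ z ∈ t, ↑(tz z) ⊆ F) :
    ∃ T : Finset X, ↑T ⊆ F ∧ (S ⊆ ⋃ w ∈ T, closedBall w r) ∧
      ((T.card : ℝ) ≤ t.card * b) := by
  classical
  refine ⟨t.biUnion tz, ?_, ?_, ?_⟩
  · intro w hw
    obtain ⟨z, hz, hwz⟩ := Finset.mem_biUnion.1 hw
    exact hF z hz hwz
  · intro s hs
    obtain ⟨z, hzt, hsz⟩ := Set.mem_iUnion₂.1 (hc hs)
    obtain ⟨w, hw, hsw⟩ := Set.mem_iUnion₂.1 (hcov z hzt ⟨hsz, hs⟩)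
    exact Set.mem_iUnion₂.2 ⟨w, Finset.mem_biUnion.2 ⟨z, hzt, hw⟩, hsw⟩
  · calc ((t.biUnion tz).card : ℝ) ≤ (∑ z ∈ t, (tz z).card : ℕ) := by
          exact_mod_cast Finset.card_biUnion_le
      _ = ∑ z ∈ t, ((tz z).card : ℝ) := by push_cast; rfl
      _ ≤ t.card * b := by
          have := Finset.sum_le_card_nsmul t (fun z => ((tz z).card : ℝ)) b hb
          simpa [nsmul_eq_mul] using this

end AuxCover
section Grid

variable {d : ℕ}

lemma coord_dist_le (y x : EuclideanSpace ℝ (Fin d)) (i : Fin d) :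
    dist (y i) (x i) ≤ dist y x := by
  rw [EuclideanSpace.dist_eq]
  rw [show dist (y i) (x i) = Real.sqrt (dist (y i) (x i) ^ 2) by
    rw [Real.sqrt_sq dist_nonneg]]
  apply Real.sqrt_le_sqrt
  exact Finset.single_le_sum (f := fun j => dist (y j) (x j) ^ 2)
    (fun j _ => sq_nonneg _) (Finset.mem_univ i)

lemma grid_cover (x : EuclideanSpace ℝ (Fin d)) {r R : ℝ} (hr : 0 < r) (hrR : r ≤ R) :
    ∃ t : Finset (EuclideanSpace ℝ (Fin d)),
      (closedBall x R ⊆ ⋃ z ∈ t, closedBall z r) ∧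
      ((t.card : ℝ) ≤ (2 * Real.sqrt d + 7) ^ d * (R / r) ^ d) := by
  classical
  have hR : 0 < R := hr.trans_le hrR
  set sd : ℝ := Real.sqrt d with hsd
  have hsd0 : 0 ≤ sd := Real.sqrt_nonneg _
  set h : ℝ := r / (sd + 1) with hhdef
  have hh : 0 < h := div_pos hr (by linarith)
  have hhr : (sd + 1) * h = r := by
    rw [hhdef]; field_simp
  set M : ℤ := ⌈R / h⌉ with hM
  have hM0 : (0:ℤ) ≤ M := Int.ceil_nonneg (le_of_lt (div_pos hR hh))
  set f : (Fin d → ℤ) → EuclideanSpace ℝ (Fin d) :=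
    fun c => (WithLp.equiv 2 ((i : Fin d) → ℝ)).symm
      (fun i => x i + (c i : ℝ) * h + h / 2) with hf
  have hfi : ∀ c i, f c i = x i + (c i : ℝ) * h + h / 2 := fun c i => rfl
  set grid : Finset (Fin d → ℤ) := Fintype.piFinset (fun _ => Finset.Icc (-M) M) with hgrid
  refine ⟨grid.image f, ?_, ?_⟩
  · intro y hy
    have hyR : dist y x ≤ R := mem_closedBall.1 hy
    set c : Fin d → ℤ := fun i => ⌊(y i - x i) / h⌋ with hc
    have habs : ∀ i, |y i - x i| ≤ R := by
      intro i
      have h1 := coord_dist_le y x i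
      rw [Real.dist_eq] at h1
      exact h1.trans hyR
    have hcg : c ∈ grid := by
      rw [hgrid, Fintype.mem_piFinset]
      intro i
      have h2 := habs i
      rw [abs_le] at h2
      rw [Finset.mem_Icc]
      constructor
      · have h3 : -R / h ≤ (y i - x i) / h := (div_le_div_iff_of_pos_right hh).2 h2.1
        have h3' : -(R / h) ≤ (y i - x i) / h := by rwa [neg_div] at h3
        have h4 : (⌊-(R / h)⌋ : ℤ) ≤ c i := Int.floor_mono h3'
        rw [Int.floor_neg] at h4
        exact h4
      · have h3 : (y i - x i) / h ≤ R / h := (div_le_div_iff_of_pos_right hh).2 h2.2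
        exact (Int.floor_mono h3).trans (Int.floor_le_ceil _)
    refine Set.mem_iUnion₂.2 ⟨f c, Finset.mem_image.2 ⟨c, hcg, rfl⟩, ?_⟩
    rw [mem_closedBall, EuclideanSpace.dist_eq]
    have hcoord : ∀ i, dist (y i) (f c i) ≤ h / 2 := by
      intro i
      set v : ℝ := y i - x i with hv
      have h5 : ((c i : ℝ)) ≤ v / h := Int.floor_le _
      have h6 : v / h < (c i : ℝ) + 1 := Int.lt_floor_add_one _
      have h7 : (c i : ℝ) * h ≤ v := by
        rw [← le_div_iff₀ hh]; exact h5
      have h8 : v < ((c i : ℝ) + 1) * h := by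
        rw [← div_lt_iff₀ hh]; exact h6
      rw [Real.dist_eq, hfi]
      have : y i - (x i + (c i : ℝ) * h + h / 2) = v - (c i : ℝ) * h - h / 2 := by
        rw [hv]; ring
      rw [this, abs_le]
      constructor <;> nlinarith
    calc Real.sqrt (∑ i, dist (y i) (f c i) ^ 2)
        ≤ Real.sqrt (∑ _i : Fin d, (h / 2) ^ 2) := by
          apply Real.sqrt_le_sqrt
          apply Finset.sum_le_sum
          intro i _
          exact pow_le_pow_left₀ dist_nonneg (hcoord i) 2
      _ = Real.sqrt ((d : ℝ) * (h / 2) ^ 2) := by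
          rw [Finset.sum_const, Finset.card_univ, Fintype.card_fin, nsmul_eq_mul]
      _ = sd * (h / 2) := by
          rw [Real.sqrt_mul (by positivity), Real.sqrt_sq (by positivity), hsd]
      _ ≤ r := by nlinarith
  · have hcard : (grid.image f).card ≤ ((2 * M + 1).toNat) ^ d := by
      calc (grid.image f).card ≤ grid.card := Finset.card_image_le
        _ = ((2 * M + 1).toNat) ^ d := by
            rw [hgrid, Fintype.card_piFinset]
            simp only [Int.card_Icc]
            rw [Finset.prod_const, Finset.card_univ, Fintype.card_fin]
            congr 1
            omega
    have hMle : ((2 * M + 1 : ℤ) : ℝ) ≤ (2 * sd + 7) * (R / r) := by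
      have h9 : (M : ℝ) < R / h + 1 := Int.ceil_lt_add_one _
      have h10 : R / h = R * (sd + 1) / r := by
        rw [hhdef]; field_simp
      have h11 : (1:ℝ) ≤ R / r := (one_le_div hr).2 hrR
      push_cast
      rw [h10] at h9
      have h12 : R * (sd + 1) / r = (sd + 1) * (R / r) := by ring
      rw [h12] at h9
      nlinarith
    calc ((grid.image f).card : ℝ) ≤ (((2 * M + 1).toNat : ℕ) : ℝ) ^ d := by
          have := hcard
          push_cast
          exact_mod_cast this
      _ = ((2 * M + 1 : ℤ) : ℝ) ^ d := by
          congr 1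
          rw [← Int.cast_natCast, Int.toNat_of_nonneg (by omega)]
      _ ≤ ((2 * sd + 7) * (R / r)) ^ d := by
          apply pow_le_pow_left₀ (by positivity) hMle
      _ = (2 * sd + 7) ^ d * (R / r) ^ d := mul_pow _ _ _

end Grid
section Chain

variable {d : ℕ} {F : Set (EuclideanSpace ℝ (Fin d))} {u s C : ℝ}

/-- ambient covering constant -/
def ambC (d : ℕ) : ℝ := (2 * Real.sqrt d + 7) ^ d

lemma ambC_pos (d : ℕ) : 0 < ambC d := by
  unfold ambC; positivity

lemma one_le_ambC (d : ℕ) : 1 ≤ ambC d := by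
  unfold ambC
  apply one_le_pow₀
  nlinarith [Real.sqrt_nonneg (d:ℝ)]

/-- ambient cover of a ball intersected with `F`, recentered in `F`. -/
lemma grid_cover_in (x : EuclideanSpace ℝ (Fin d)) {r R : ℝ} (hr : 0 < r) (hrR : r ≤ R)
    (F : Set (EuclideanSpace ℝ (Fin d))) :
    ∃ t : Finset (EuclideanSpace ℝ (Fin d)), ↑t ⊆ F ∧
      (closedBall x R ∩ F ⊆ ⋃ z ∈ t, closedBall z (2 * r)) ∧
      ((t.card : ℝ) ≤ ambC d * (R / r) ^ d) := by
  obtain ⟨t0, ht0c, ht0card⟩ := grid_cover x hr hrR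
  have hsub : closedBall x R ∩ F ⊆ ⋃ z ∈ t0, closedBall z r :=
    (Set.inter_subset_left).trans ht0c
  obtain ⟨t, htF, htcard, htc⟩ := recenter_cover hsub (Set.inter_subset_right)
  exact ⟨t, htF, htc, le_trans (by exact_mod_cast htcard) ht0card⟩

/-- One refinement step: from a ball centred in `F` at scale `R'` to scale `R' ^ u`,
with all centres in `F`. -/
lemma chain_step (hu : 1 < u) (hs : 0 ≤ s) (hC : 0 < C)
    (H : ∀ R : ℝ, 0 < R → R < 1 → ∀ x ∈ F,
      (coveringNumber (R ^ u) (closedBall x R ∩ F) : ℝ≥0∞)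
        ≤ ENNReal.ofReal (C * (R / R ^ u) ^ s))
    {z : EuclideanSpace ℝ (Fin d)} (hz : z ∈ F) {R' : ℝ} (hR0 : 0 < R') (hR1 : R' < 1) :
    ∃ t : Finset (EuclideanSpace ℝ (Fin d)), ↑t ⊆ F ∧
      (closedBall z R' ∩ F ⊆ ⋃ w ∈ t, closedBall w (R' ^ u)) ∧
      ((t.card : ℝ) ≤ C * (R' ^ (1 - u)) ^ s * (ambC d * 4 ^ d)) := by
  set ρ : ℝ := R' ^ u with hρdef
  have hρ : 0 < ρ := Real.rpow_pos_of_pos hR0 u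
  have hratio : R' / ρ = R' ^ (1 - u) := by
    rw [hρdef, Real.rpow_sub hR0, Real.rpow_one]
  have hb : (0:ℝ) ≤ C * (R' / ρ) ^ s := by
    have : (0:ℝ) < R' / ρ := div_pos hR0 hρ
    positivity
  obtain ⟨t0, ht0c, ht0card⟩ := exists_cover_of_le_ofReal hb (H R' hR0 hR1 z hz)
  obtain ⟨t1, ht1F, ht1card, ht1c⟩ := recenter_cover ht0c (Set.inter_subset_right)
  -- cover each ball of radius 2ρ centred in F by balls of radius ρ centred in F
  have key : ∀ w ∈ t1, ∃ tw : Finset (EuclideanSpace ℝ (Fin d)), ↑tw ⊆ F ∧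
      (closedBall w (2 * ρ) ∩ F ⊆ ⋃ v ∈ tw, closedBall v ρ) ∧
      ((tw.card : ℝ) ≤ ambC d * 4 ^ d) := by
    intro w _
    obtain ⟨tw, h1, h2, h3⟩ := grid_cover_in w (r := ρ / 2) (R := 2 * ρ)
      (by positivity) (by linarith) F
    refine ⟨tw, h1, ?_, ?_⟩
    · have : 2 * (ρ / 2) = ρ := by ring
      rwa [this] at h2
    · have : (2 * ρ) / (ρ / 2) = 4 := by field_simp; ring
      rwa [this] at h3
  choose tw htwF htwc htwcard using key
  classical
  obtain ⟨T, hTF, hTc, hTcard⟩ := exists_cover_biUnion (S := closedBall z R' ∩ F)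
    (t := t1) (G := fun w => closedBall w (2 * ρ)) ht1c
    (fun w => if h : w ∈ t1 then tw w h else ∅)
    (by
      intro w hw
      simp only [dif_pos hw]
      intro p hp
      exact htwc w hw ⟨hp.1, hp.2.2⟩)
    (by
      intro w hw
      simp only [dif_pos hw]
      exact htwcard w hw)
    (by
      intro w hw
      simp only [dif_pos hw]
      exact htwF w hw)
  refine ⟨T, hTF, hTc, ?_⟩
  calc (T.card : ℝ) ≤ t1.card * (ambC d * 4 ^ d) := hTcard
    _ ≤ (C * (R' / ρ) ^ s) * (ambC d * 4 ^ d) := by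
        apply mul_le_mul_of_nonneg_right _ (by have := ambC_pos d; positivity)
        exact le_trans (by exact_mod_cast ht1card) ht0card
    _ = C * (R' ^ (1 - u)) ^ s * (ambC d * 4 ^ d) := by rw [hratio]

end Chain
section Chain2

variable {d : ℕ} {F : Set (EuclideanSpace ℝ (Fin d))} {u s C : ℝ}

lemma chain_cover (hu : 1 < u) (hs : 0 ≤ s) (hC : 0 < C)
    (H : ∀ R : ℝ, 0 < R → R < 1 → ∀ x ∈ F,
      (coveringNumber (R ^ u) (closedBall x R ∩ F) : ℝ≥0∞)
        ≤ ENNReal.ofReal (C * (R / R ^ u) ^ s)) (k : ℕ) :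
    ∀ R : ℝ, 0 < R → R < 1 → ∀ x ∈ F,
    ∃ t : Finset (EuclideanSpace ℝ (Fin d)), ↑t ⊆ F ∧
      (closedBall x R ∩ F ⊆ ⋃ z ∈ t, closedBall z (R ^ (u ^ k))) ∧
      ((t.card : ℝ) ≤ (C * (ambC d * 4 ^ d)) ^ k * (R ^ (1 - u ^ k)) ^ s) := by
  induction k with
  | zero =>
    intro R hR0 hR1 x hx
    refine ⟨{x}, by simpa using hx, ?_, ?_⟩
    · intro y hy
      simp only [pow_zero, Real.rpow_one]
      exact Set.mem_iUnion₂.2 ⟨x, Finset.mem_singleton_self x, hy.1⟩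
    · simp [Real.rpow_zero]
  | succ k ih =>
    intro R hR0 hR1 x hx
    obtain ⟨t, htF, htc, htcard⟩ := ih R hR0 hR1 x hx
    set R' : ℝ := R ^ (u ^ k) with hR'def
    have hR'0 : 0 < R' := Real.rpow_pos_of_pos hR0 _
    have hR'1 : R' < 1 := Real.rpow_lt_one hR0.le hR1 (by positivity)
    set E : ℝ := ambC d * 4 ^ d with hEdef
    have hE : 0 < E := by have := ambC_pos d; positivity
    have key : ∀ z ∈ t, ∃ tz : Finset (EuclideanSpace ℝ (Fin d)), ↑tz ⊆ F ∧
        (closedBall z R' ∩ F ⊆ ⋃ w ∈ tz, closedBall w (R' ^ u)) ∧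
        ((tz.card : ℝ) ≤ C * (R' ^ (1 - u)) ^ s * E) := by
      intro z hz
      exact chain_step hu hs hC H (htF hz) hR'0 hR'1
    choose tz htzF htzc htzcard using key
    classical
    obtain ⟨T, hTF, hTc, hTcard⟩ := exists_cover_biUnion (S := closedBall x R ∩ F)
      (t := t) (G := fun z => closedBall z R') htc
      (fun z => if h : z ∈ t then tz z h else ∅)
      (by
        intro z hz
        simp only [dif_pos hz]
        intro p hp
        exact htzc z hz ⟨hp.1, hp.2.2⟩)
      (by
        intro z hz
        simp only [dif_pos hz]
        exact htzcard z hz)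
      (by
        intro z hz
        simp only [dif_pos hz]
        exact htzF z hz)
    have hrad : R' ^ u = R ^ (u ^ (k + 1)) := by
      rw [hR'def, ← Real.rpow_mul hR0.le, pow_succ]
    refine ⟨T, hTF, by rwa [hrad] at hTc, ?_⟩
    have hb0 : (0:ℝ) ≤ (R' ^ (1 - u)) ^ s := by positivity
    have hcard0 : (0:ℝ) ≤ (C * E) ^ k * (R ^ (1 - u ^ k)) ^ s := by positivity
    calc (T.card : ℝ) ≤ t.card * (C * (R' ^ (1 - u)) ^ s * E) := hTcard
      _ ≤ ((C * E) ^ k * (R ^ (1 - u ^ k)) ^ s) * (C * (R' ^ (1 - u)) ^ s * E) := by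
          apply mul_le_mul_of_nonneg_right htcard (by positivity)
      _ = (C * E) ^ (k + 1) * ((R ^ (1 - u ^ k)) ^ s * (R' ^ (1 - u)) ^ s) := by ring
      _ = (C * E) ^ (k + 1) * (R ^ (1 - u ^ (k + 1))) ^ s := by
          have e1 : (R ^ (u ^ k) : ℝ) ^ (1 - u) = R ^ (u ^ k * (1 - u)) :=
            (Real.rpow_mul hR0.le _ _).symm
          have e2 : (R : ℝ) ^ (1 - u ^ k) * R ^ (u ^ k * (1 - u)) = R ^ ((1 - u ^ k) + u ^ k * (1 - u)) :=
            (Real.rpow_add hR0 _ _).symm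
          have e3 : (1 - u ^ k) + u ^ k * (1 - u) = 1 - u ^ (k + 1) := by ring
          rw [hR'def, e1, ← Real.mul_rpow (by positivity) (by positivity), e2, e3]
  
end Chain2
section Helpers

lemma nat_le_geom {v : ℝ} (hv : 1 < v) (k : ℕ) : (k : ℝ) * (v - 1) ≤ v ^ k := by
  have h := one_add_mul_le_pow (a := v - 1) (by linarith) k
  have : 1 + (k:ℝ) * (v-1) ≤ v ^ k := by
    convert h using 2
    · rfl
    ring
  linarith

/-- absorption helper: `D^k ≲ 2^(c (u^k - 1))`. -/
lemma absorb {D u c : ℝ} (hD : 1 ≤ D) (hu : 1 < u) (hc : 0 < c) :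
    ∃ C₂ : ℝ, 1 ≤ C₂ ∧ ∀ k : ℕ, D ^ k ≤ C₂ * 2 ^ (c * (u ^ k - 1)) := by
  set w : ℝ := Real.sqrt u with hw
  have hw1 : 1 < w := by
    nlinarith [Real.sq_sqrt (by linarith : (0:ℝ) ≤ u), Real.sqrt_nonneg u]
  have hwsq : w ^ 2 = u := Real.sq_sqrt (by linarith)
  set L : ℝ := Real.log D with hL
  have hL0 : 0 ≤ L := Real.log_nonneg hD
  have hlog2 : (0:ℝ) < Real.log 2 := Real.log_pos one_lt_two
  obtain ⟨N, hN⟩ := pow_unbounded_of_one_lt (L / (w - 1) / (c * Real.log 2)) hw1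
  refine ⟨Real.exp (c * Real.log 2 + (N : ℝ) * L), ?_, ?_⟩
  · rw [← Real.exp_zero]
    apply Real.exp_le_exp.2
    positivity
  intro k
  have key : (k : ℝ) * L ≤ (c * Real.log 2 + (N : ℝ) * L) + c * (u ^ k - 1) * Real.log 2 := by
    rcases le_or_gt (k : ℝ) (N : ℝ) with hk | hk
    · have h1 : (k:ℝ) * L ≤ (N:ℝ) * L := mul_le_mul_of_nonneg_right hk hL0
      have h2 : (0:ℝ) ≤ c * (u ^ k - 1) * Real.log 2 := by
        have : (1:ℝ) ≤ u ^ k := one_le_pow₀ (by linarith)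
        have h3 : (0:ℝ) ≤ u ^ k - 1 := by linarith
        positivity
      linarith [hlog2.le, mul_pos hc hlog2]
    · -- k > N : use sqrt trick
      have hkN : (N:ℝ) ≤ (k:ℝ) := hk.le
      have hwk : L / (w - 1) / (c * Real.log 2) < w ^ k := by
        refine hN.trans_le (pow_le_pow_right₀ hw1.le ?_)
        exact_mod_cast hkN
      have hwk0 : (0:ℝ) < w ^ k := by positivity
      have h1 : (k:ℝ) * L ≤ w ^ k * (L / (w - 1)) := by
        have hg := nat_le_geom hw1 k
        have hw0 : (0:ℝ) < w - 1 := by linarith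
        have hk' : (k:ℝ) ≤ w ^ k / (w - 1) := by
          rw [le_div_iff₀ hw0]; exact hg
        calc (k:ℝ) * L ≤ (w ^ k / (w - 1)) * L := mul_le_mul_of_nonneg_right hk' hL0
          _ = w ^ k * (L / (w - 1)) := by ring
      have h2 : w ^ k * (L / (w - 1)) ≤ w ^ k * (c * Real.log 2 * w ^ k) := by
        apply mul_le_mul_of_nonneg_left _ hwk0.le
        rw [div_lt_iff₀ (by positivity)] at hwk
        nlinarith
      have h3 : w ^ k * (c * Real.log 2 * w ^ k) = c * Real.log 2 * u ^ k := by
        rw [← hwsq, ← pow_mul, mul_comm 2 k, pow_mul]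
        ring
      have h4 : c * Real.log 2 * u ^ k = c * (u ^ k - 1) * Real.log 2 + c * Real.log 2 := by ring
      have h5 : (0:ℝ) ≤ (N:ℝ) * L := by positivity
      nlinarith
  have hD0 : (0:ℝ) < D := by linarith
  calc D ^ k = Real.exp ((k:ℝ) * L) := by
        rw [hL, mul_comm, Real.exp_mul, Real.exp_log hD0, Real.rpow_natCast]
    _ ≤ Real.exp ((c * Real.log 2 + (N : ℝ) * L) + c * (u ^ k - 1) * Real.log 2) :=
        Real.exp_le_exp.2 key
    _ = Real.exp (c * Real.log 2 + (N : ℝ) * L) * 2 ^ (c * (u ^ k - 1)) := by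
        rw [Real.exp_add]
        congr 1
        rw [Real.rpow_def_of_pos (by norm_num : (0:ℝ) < 2)]
        ring_nf
  
/-- scale selection -/
lemma choose_k {u r R : ℝ} (hu : 1 < u) (hr : 0 < r) (hrR : r ≤ R ^ u)
    (hR0 : 0 < R) (hR1 : R < 1) :
    ∃ k : ℕ, 1 ≤ k ∧ r ≤ R ^ (u ^ k) ∧ R ^ (u ^ (k + 1)) < r := by
  have hex : ∃ m : ℕ, R ^ (u ^ (m + 1)) < r := by
    obtain ⟨n, hn⟩ := exists_pow_lt_of_lt_one hr
      (Real.rpow_lt_one hR0.le hR1 (by linarith) : R ^ (u - 1) < 1)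
    refine ⟨n, ?_⟩
    have h1 : (1:ℝ) + (n + 1 : ℕ) * (u - 1) ≤ u ^ (n + 1) := by
      have := one_add_mul_le_pow (a := u - 1) (by linarith) (n + 1)
      convert this using 2
      · rfl
      ring
    have h2 : R ^ (u ^ (n + 1)) ≤ R ^ ((1:ℝ) + (n + 1 : ℕ) * (u - 1)) :=
      Real.rpow_le_rpow_of_exponent_ge hR0 hR1.le h1
    have h3 : R ^ ((1:ℝ) + (n + 1 : ℕ) * (u - 1)) = R * ((R ^ (u - 1)) ^ (n+1)) := by
      have he : (1:ℝ) + ((n+1:ℕ):ℝ) * (u-1) = 1 + (u-1) * ((n+1:ℕ):ℝ) := by ring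
      rw [he, Real.rpow_add hR0, Real.rpow_one, ← Real.rpow_natCast (R ^ (u-1)) (n+1),
        ← Real.rpow_mul hR0.le]
    have h5 : ((R ^ (u-1)) ^ (n+1) : ℝ) ≤ (R ^ (u-1)) ^ n := by
      apply pow_le_pow_of_le_one (by positivity) _ (Nat.le_succ n)
      exact (Real.rpow_lt_one hR0.le hR1 (by linarith)).le
    calc R ^ (u ^ (n + 1)) ≤ R * ((R ^ (u-1)) ^ (n+1)) := h2.trans_eq h3
      _ ≤ 1 * ((R ^ (u-1)) ^ n) := by
          apply mul_le_mul hR1.le h5 (by positivity) zero_le_one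
      _ < r := by rw [one_mul]; exact hn
  classical
  set K := Nat.find hex with hK
  have hKspec : R ^ (u ^ (K + 1)) < r := Nat.find_spec hex
  have hK1 : 1 ≤ K := by
    by_contra h
    push_neg at h
    interval_cases K
    · have h7 := hKspec
      norm_num at h7
      exact absurd (hrR.trans_lt h7) (lt_irrefl r)
  refine ⟨K, hK1, ?_, hKspec⟩
  have hmin : ¬ (R ^ (u ^ ((K - 1) + 1)) < r) := Nat.find_min hex (by omega)
  have : (K - 1) + 1 = K := by omega
  rw [this] at hmin
  linarith [not_lt.1 hmin]

lemma exponent_ineq {a q s dd s' : ℝ} (ha : 0 < a) (hq : 0 < q)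
    (hkey : s * Real.log a + dd * Real.log q ≤ s' * (Real.log a + Real.log q)) :
    a ^ s * q ^ dd ≤ (a * q) ^ s' := by
  rw [Real.rpow_def_of_pos ha, Real.rpow_def_of_pos hq, Real.rpow_def_of_pos (by positivity),
    ← Real.exp_add, Real.log_mul (ne_of_gt ha) (ne_of_gt hq)]
  apply Real.exp_le_exp.2
  nlinarith [hkey]

end Helpers
section Core

variable {d : ℕ} {F : Set (EuclideanSpace ℝ (Fin d))} {u s C : ℝ}

lemma core_half (hu : 1 < u) (hs : 0 ≤ s) (hC : 0 < C)
    (H : ∀ R : ℝ, 0 < R → R < 1 → ∀ x ∈ F,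
      (coveringNumber (R ^ u) (closedBall x R ∩ F) : ℝ≥0∞)
        ≤ ENNReal.ofReal (C * (R / R ^ u) ^ s))
    {s' ε : ℝ} (hss' : s ≤ s') (hkey : ((d:ℝ) - s') * u ≤ s' - s) (hε : 0 < ε) :
    ∃ C₁ : ℝ, 0 < C₁ ∧ ∀ r R : ℝ, 0 < r → r ≤ R ^ u → 0 < R → R ≤ 1/2 → ∀ x ∈ F,
      ∃ T : Finset (EuclideanSpace ℝ (Fin d)),
        (closedBall x R ∩ F ⊆ ⋃ z ∈ T, closedBall z r) ∧
        (T.card : ℝ) ≤ C₁ * (R / r) ^ (s' + ε) := by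
  have hamb := ambC_pos d
  have hamb1 := one_le_ambC d
  set D0 : ℝ := C * (ambC d * 4 ^ d) with hD0def
  have hD00 : 0 < D0 := by positivity
  set D : ℝ := max D0 1 with hDdef
  have hD1 : 1 ≤ D := le_max_right _ _
  obtain ⟨C₂, hC₂1, habs⟩ := absorb hD1 hu hε
  refine ⟨C₂ * ambC d, by positivity, ?_⟩
  intro r R hr hrR hR0 hRhalf x hx
  have hR1 : R < 1 := lt_of_le_of_lt hRhalf (by norm_num)
  obtain ⟨k, hk1, hk2, hk3⟩ := choose_k hu hr hrR hR0 hR1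
  obtain ⟨t, htF, htc, htcard⟩ := chain_cover hu hs hC H k R hR0 hR1 x hx
  set ρ : ℝ := R ^ (u ^ k) with hρdef
  have hρ0 : 0 < ρ := Real.rpow_pos_of_pos hR0 _
  have key : ∀ z ∈ t, ∃ tzz : Finset (EuclideanSpace ℝ (Fin d)),
      (closedBall z ρ ⊆ ⋃ w ∈ tzz, closedBall w r) ∧
      ((tzz.card : ℝ) ≤ ambC d * (ρ / r) ^ d) := by
    intro z _
    obtain ⟨tzz, h1, h2⟩ := grid_cover z hr hk2
    exact ⟨tzz, h1, h2⟩
  choose tz htzc htzcard using key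
  classical
  obtain ⟨T, -, hTc, hTcard⟩ := exists_cover_biUnion (S := closedBall x R ∩ F)
    (t := t) (G := fun z => closedBall z ρ) (F := Set.univ) htc
    (fun z => if h : z ∈ t then tz z h else ∅)
    (by
      intro z hz
      simp only [dif_pos hz]
      exact (Set.inter_subset_left).trans (htzc z hz))
    (by
      intro z hz
      simp only [dif_pos hz]
      exact htzcard z hz)
    (by intro z hz; simp)
  refine ⟨T, hTc, ?_⟩
  -- numeric estimate
  have huk1 : (1:ℝ) ≤ u ^ k := one_le_pow₀ hu.le
  have hρr : ρ ≤ R := by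
    rw [hρdef]
    calc R ^ (u ^ k) ≤ R ^ (1:ℝ) := Real.rpow_le_rpow_of_exponent_ge hR0 hR1.le huk1
      _ = R := Real.rpow_one R
  set L : ℝ := -Real.log R with hL
  have hL2 : Real.log 2 ≤ L := by
    rw [hL]
    have : Real.log R ≤ Real.log (1/2) := Real.log_le_log hR0 hRhalf
    rw [Real.log_div one_ne_zero (by norm_num), Real.log_one] at this
    linarith
  have hL0 : 0 ≤ L := le_trans (Real.log_nonneg one_le_two) hL2
  have hloga : Real.log (R / ρ) = (u ^ k - 1) * L := by
    rw [Real.log_div (ne_of_gt hR0) (ne_of_gt hρ0), hρdef, Real.log_rpow hR0, hL]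
    ring
  have hlogq0 : 0 ≤ Real.log (ρ / r) := Real.log_nonneg ((one_le_div hr).2 hk2)
  have hlogq : Real.log (ρ / r) ≤ (u ^ (k+1) - u ^ k) * L := by
    have h1 : ρ / r ≤ ρ / R ^ (u ^ (k+1)) :=
      div_le_div_of_nonneg_left hρ0.le (Real.rpow_pos_of_pos hR0 _) hk3.le
    have h2 : ρ / R ^ (u ^ (k+1)) = R ^ (u ^ k - u ^ (k+1)) := by
      rw [hρdef, ← Real.rpow_sub hR0]
    have h3 : Real.log (ρ / r) ≤ Real.log (R ^ (u ^ k - u ^ (k+1))) := by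
      rw [← h2]
      exact Real.log_le_log (div_pos hρ0 hr) h1
    rw [Real.log_rpow hR0] at h3
    rw [hL]
    calc Real.log (ρ / r) ≤ (u ^ k - u ^ (k+1)) * Real.log R := h3
      _ = (u ^ (k+1) - u ^ k) * -Real.log R := by ring
  -- the exponent inequality
  have hexp : (R / ρ) ^ s * (ρ / r) ^ ((d:ℕ):ℝ) ≤ (R / ρ * (ρ / r)) ^ s' := by
    apply exponent_ineq (div_pos hR0 hρ0) (div_pos hρ0 hr)
    have hA0 : 0 ≤ Real.log (R / ρ) := by
      rw [hloga]
      have : (0:ℝ) ≤ u ^ k - 1 := by linarith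
      positivity
    have huuk : u ≤ u ^ k := by
      calc u = u ^ 1 := (pow_one u).symm
        _ ≤ u ^ k := pow_le_pow_right₀ hu.le hk1
    have hmain : ((d:ℝ) - s') * Real.log (ρ / r) ≤ (s' - s) * Real.log (R / ρ) := by
      rcases le_or_gt ((d:ℝ) - s') 0 with hd | hd
      · have h4 : ((d:ℝ) - s') * Real.log (ρ / r) ≤ 0 :=
          mul_nonpos_of_nonpos_of_nonneg hd hlogq0
        have h5 : 0 ≤ (s' - s) * Real.log (R / ρ) := mul_nonneg (by linarith) hA0
        linarith
      · have h4 : ((d:ℝ) - s') * Real.log (ρ / r) ≤ ((d:ℝ) - s') * ((u ^ (k+1) - u ^ k) * L) :=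
          mul_le_mul_of_nonneg_left hlogq hd.le
        have h6 : u ^ (k+1) - u ^ k ≤ u * (u ^ k - 1) := by
          have h6a : u ^ (k+1) = u * u ^ k := by ring
          nlinarith
        have h7 : ((d:ℝ) - s') * ((u ^ (k+1) - u ^ k) * L) ≤
            ((d:ℝ) - s') * (u * ((u ^ k - 1) * L)) := by
          apply mul_le_mul_of_nonneg_left _ hd.le
          calc (u ^ (k+1) - u ^ k) * L ≤ (u * (u ^ k - 1)) * L :=
                mul_le_mul_of_nonneg_right h6 hL0
            _ = u * ((u ^ k - 1) * L) := by ring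
        have h10 : (0:ℝ) ≤ (u ^ k - 1) * L := mul_nonneg (by linarith) hL0
        have h9 : ((d:ℝ) - s') * (u * ((u ^ k - 1) * L)) ≤ (s' - s) * ((u ^ k - 1) * L) := by
          calc ((d:ℝ) - s') * (u * ((u ^ k - 1) * L))
              = (((d:ℝ) - s') * u) * ((u ^ k - 1) * L) := by ring
            _ ≤ (s' - s) * ((u ^ k - 1) * L) := mul_le_mul_of_nonneg_right hkey h10
        rw [hloga]
        exact le_trans h4 (le_trans h7 h9)
    linarith [hmain]
  have hRρr : R / ρ * (ρ / r) = R / r := by field_simp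
  have hRr1 : (1:ℝ) ≤ R / r := by
    rw [le_div_iff₀ hr]
    calc 1 * r = r := one_mul r
      _ ≤ ρ := hk2
      _ ≤ R := hρr
  -- absorption
  have hRr0 : (0:ℝ) < R / r := lt_of_lt_of_le zero_lt_one hRr1
  have habs2 : D0 ^ k ≤ C₂ * (R / r) ^ ε := by
    calc D0 ^ k ≤ D ^ k := pow_le_pow_left₀ hD00.le (le_max_left _ _) k
      _ ≤ C₂ * 2 ^ (ε * (u ^ k - 1)) := habs k
      _ ≤ C₂ * (R / r) ^ ε := by
          apply mul_le_mul_of_nonneg_left _ (by linarith)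
          have h2a : (2:ℝ) ^ ((u ^ k - 1 : ℝ)) ≤ R / ρ := by
            have he1 : R / ρ = Real.exp ((u ^ k - 1) * L) := by
              rw [← hloga, Real.exp_log (div_pos hR0 hρ0)]
            have he2 : (2:ℝ) ^ ((u ^ k - 1 : ℝ)) =
                Real.exp ((u ^ k - 1) * Real.log 2) := by
              rw [Real.rpow_def_of_pos (by norm_num : (0:ℝ) < 2)]
              ring_nf
            rw [he1, he2]
            apply Real.exp_le_exp.2
            apply mul_le_mul_of_nonneg_left hL2 (by linarith)
          have h2b : R / ρ ≤ R / r := div_le_div_of_nonneg_left hR0.le hr hk2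
          calc (2:ℝ) ^ (ε * (u ^ k - 1)) = ((2:ℝ) ^ ((u ^ k - 1 : ℝ))) ^ ε := by
                rw [← Real.rpow_mul (by norm_num : (0:ℝ) ≤ 2)]
                ring_nf
            _ ≤ (R / r) ^ ε := by
                apply Real.rpow_le_rpow (by positivity) (h2a.trans h2b) hε.le
  -- final assembly
  have hRdiv : R ^ ((1:ℝ) - u ^ k) = R / ρ := by
    rw [Real.rpow_sub hR0, Real.rpow_one, hρdef]
  rw [hRdiv] at htcard
  have hq0 : (0:ℝ) ≤ (ρ / r) ^ d := by positivity
  have hb1 : (T.card:ℝ) ≤ (D0 ^ k * (R / ρ) ^ s) * (ambC d * (ρ / r) ^ d) :=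
    hTcard.trans (mul_le_mul_of_nonneg_right htcard (by positivity))
  have hb2 : (D0 ^ k * (R / ρ) ^ s) * (ambC d * (ρ / r) ^ d)
      = (D0 ^ k * ((R / ρ) ^ s * (ρ / r) ^ ((d:ℕ):ℝ))) * ambC d := by
    rw [Real.rpow_natCast]
    ring
  have hb3 : (R / ρ) ^ s * (ρ / r) ^ ((d:ℕ):ℝ) ≤ (R / r) ^ s' := by
    rw [← hRρr]
    exact hexp
  have hb4 : D0 ^ k * ((R / ρ) ^ s * (ρ / r) ^ ((d:ℕ):ℝ))
      ≤ (C₂ * (R / r) ^ ε) * (R / r) ^ s' := by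
    apply mul_le_mul habs2 hb3 ?_ (by positivity)
    have : (0:ℝ) < R / ρ := div_pos hR0 hρ0
    have : (0:ℝ) < ρ / r := div_pos hρ0 hr
    positivity
  calc (T.card:ℝ) ≤ (D0 ^ k * ((R / ρ) ^ s * (ρ / r) ^ ((d:ℕ):ℝ))) * ambC d := by
        rw [← hb2]; exact hb1
    _ ≤ ((C₂ * (R / r) ^ ε) * (R / r) ^ s') * ambC d :=
        mul_le_mul_of_nonneg_right hb4 hamb.le
    _ = C₂ * ambC d * (R / r) ^ (s' + ε) := by
        rw [Real.rpow_add hRr0]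
        ring

end Core
section CoreAll

variable {d : ℕ} {F : Set (EuclideanSpace ℝ (Fin d))} {u s C : ℝ}

lemma core_all (hu : 1 < u) (hs : 0 ≤ s) (hC : 0 < C)
    (H : ∀ R : ℝ, 0 < R → R < 1 → ∀ x ∈ F,
      (coveringNumber (R ^ u) (closedBall x R ∩ F) : ℝ≥0∞)
        ≤ ENNReal.ofReal (C * (R / R ^ u) ^ s))
    {s' ε : ℝ} (hss' : s ≤ s') (hkey : ((d:ℝ) - s') * u ≤ s' - s) (hε : 0 < ε)
    (hs''0 : 0 ≤ s' + ε) (hs''d : s' + ε ≤ (d:ℝ)) :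
    ∃ C₃ : ℝ, 0 < C₃ ∧ ∀ r R : ℝ, 0 < r → r ≤ R ^ u → 0 < R → R < 1 → ∀ x ∈ F,
      ∃ T : Finset (EuclideanSpace ℝ (Fin d)),
        (closedBall x R ∩ F ⊆ ⋃ z ∈ T, closedBall z r) ∧
        (T.card : ℝ) ≤ C₃ * (R / r) ^ (s' + ε) := by
  have hamb := ambC_pos d
  obtain ⟨C₁, hC₁, hcore⟩ := core_half hu hs hC H hss' hkey hε
  set s'' : ℝ := s' + ε with hs''def
  set C₃ : ℝ := C₁ + ambC d * (2 ^ u) ^ ((d:ℝ) - s'') + ambC d * 8 ^ d * C₁ with hC₃def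
  have h2u : (0:ℝ) < 2 ^ u := Real.rpow_pos_of_pos two_pos u
  have hC₃0 : 0 < C₃ := by positivity
  refine ⟨C₃, hC₃0, ?_⟩
  intro r R hr hrR hR0 hR1 x hx
  have hRuR : R ^ u < R := by
    calc R ^ u < R ^ (1:ℝ) := Real.rpow_lt_rpow_of_exponent_gt hR0 hR1 hu
      _ = R := Real.rpow_one R
  have hrR' : r < R := hrR.trans_lt hRuR
  have hRr0 : (0:ℝ) < R / r := div_pos hR0 hr
  have hRr1 : (1:ℝ) ≤ R / r := (one_le_div hr).2 hrR'.le
  have hrp : (0:ℝ) ≤ (R / r) ^ s'' := Real.rpow_nonneg hRr0.le _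
  rcases le_or_gt R (1/2) with hRhalf | hRhalf
  · -- R ≤ 1/2 : core estimate
    obtain ⟨T, hTc, hTcard⟩ := hcore r R hr hrR hR0 hRhalf x hx
    refine ⟨T, hTc, hTcard.trans ?_⟩
    apply mul_le_mul_of_nonneg_right _ hrp
    rw [hC₃def]
    have h1 : (0:ℝ) ≤ ambC d * (2 ^ u) ^ ((d:ℝ) - s'') := by positivity
    have h2 : (0:ℝ) ≤ ambC d * 8 ^ d * C₁ := by positivity
    linarith
  · rcases lt_or_ge ((1/2 : ℝ) ^ u) r with hr2 | hr2
    · -- r comparable to R : ambient bound only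
      obtain ⟨T, hTc, hTcard⟩ := grid_cover x hr hrR'.le
      refine ⟨T, (Set.inter_subset_left).trans hTc, ?_⟩
      have hRr2u : R / r ≤ 2 ^ u := by
        have e1 : ((1/2 : ℝ)) ^ u = (2 ^ u)⁻¹ := by
          rw [one_div, Real.inv_rpow (by norm_num : (0:ℝ) ≤ 2)]
        rw [div_le_iff₀ hr]
        calc R ≤ 1 := hR1.le
          _ ≤ 2 ^ u * ((1/2 : ℝ) ^ u) := by
              rw [e1, mul_inv_cancel₀ (ne_of_gt h2u)]
          _ ≤ 2 ^ u * r := by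
              apply mul_le_mul_of_nonneg_left hr2.le h2u.le
      calc (T.card : ℝ) ≤ ambC d * (R / r) ^ d := hTcard
        _ = ambC d * (R / r) ^ ((d:ℕ):ℝ) := by rw [Real.rpow_natCast]
        _ = ambC d * ((R / r) ^ ((d:ℝ) - s'') * (R / r) ^ s'') := by
            rw [← Real.rpow_add hRr0]
            ring_nf
        _ ≤ ambC d * ((2 ^ u) ^ ((d:ℝ) - s'') * (R / r) ^ s'') := by
            apply mul_le_mul_of_nonneg_left _ hamb.le
            apply mul_le_mul_of_nonneg_right _ hrp
            exact Real.rpow_le_rpow hRr0.le hRr2u (by linarith)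
        _ = (ambC d * (2 ^ u) ^ ((d:ℝ) - s'')) * (R / r) ^ s'' := by ring
        _ ≤ C₃ * (R / r) ^ s'' := by
            apply mul_le_mul_of_nonneg_right _ hrp
            rw [hC₃def]
            have h2 : (0:ℝ) ≤ ambC d * 8 ^ d * C₁ := by positivity
            linarith
    · -- R > 1/2 and r small : reduce to balls of radius 1/2 centred in F
      obtain ⟨t, htF, htc, htcard⟩ := grid_cover_in x (r := 1/8) (R := R)
        (by norm_num) (by linarith) F
      have key : ∀ w ∈ t, ∃ tww : Finset (EuclideanSpace ℝ (Fin d)),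
          (closedBall w (1/2) ∩ F ⊆ ⋃ z ∈ tww, closedBall z r) ∧
          ((tww.card : ℝ) ≤ C₁ * ((1/2 : ℝ) / r) ^ s'') := by
        intro w hw
        obtain ⟨T, h1, h2⟩ := hcore r (1/2) hr hr2 (by norm_num) (by norm_num) w (htF hw)
        exact ⟨T, h1, h2⟩
      choose tw htwc htwcard using key
      classical
      obtain ⟨T, -, hTc, hTcard⟩ := exists_cover_biUnion (S := closedBall x R ∩ F)
        (t := t) (G := fun w => closedBall w (2 * (1/8))) (F := Set.univ) htc
        (fun w => if h : w ∈ t then tw w h else ∅)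
        (by
          intro w hw
          simp only [dif_pos hw]
          intro p hp
          apply htwc w hw
          refine ⟨?_, hp.2.2⟩
          exact closedBall_subset_closedBall (by norm_num) hp.1)
        (by
          intro w hw
          simp only [dif_pos hw]
          exact htwcard w hw)
        (by intro w hw; simp)
      refine ⟨T, hTc, ?_⟩
      have hhalfr : ((1/2 : ℝ)) / r ≤ R / r := by
        gcongr
      calc (T.card : ℝ) ≤ t.card * (C₁ * ((1/2 : ℝ) / r) ^ s'') := hTcard
        _ ≤ (ambC d * (R / (1/8)) ^ d) * (C₁ * ((1/2 : ℝ) / r) ^ s'') := by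
            apply mul_le_mul_of_nonneg_right htcard
            positivity
        _ ≤ (ambC d * 8 ^ d) * (C₁ * (R / r) ^ s'') := by
            apply mul_le_mul
            · apply mul_le_mul_of_nonneg_left _ hamb.le
              apply pow_le_pow_left₀ (by positivity)
              rw [div_le_iff₀ (by norm_num : (0:ℝ) < 1/8)]
              norm_num
              linarith
            · apply mul_le_mul_of_nonneg_left _ hC₁.le
              apply Real.rpow_le_rpow (by positivity) hhalfr hs''0
            · positivity
            · positivity
        _ = (ambC d * 8 ^ d * C₁) * (R / r) ^ s'' := by ring
        _ ≤ C₃ * (R / r) ^ s'' := by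
            apply mul_le_mul_of_nonneg_right _ hrp
            rw [hC₃def]
            have h1 : (0:ℝ) ≤ ambC d * (2 ^ u) ^ ((d:ℝ) - s'') := by positivity
            linarith

end CoreAll
/-- Full-dimension equivalence of the spectra: `\overline{dim}_A^θ F = d ↔ dim_A^θ F = d`. -/
theorem upperSpectrum_eq_dim_iff_assouadSpectrum_eq_dim
    (d : ℕ) (θ : ℝ) (hθ : θ ∈ Set.Ioo (0 : ℝ) 1) (F : Set (EuclideanSpace ℝ (Fin d))) :
    upperSpectrum θ F = d ↔ assouadSpectrum θ F = d := by
  obtain ⟨hθ0, hθ1⟩ := hθ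
  have hu : 1 < 1/θ := (one_lt_div hθ0).2 hθ1
  have hamb := ambC_pos d
  unfold upperSpectrum assouadSpectrum
  set SU : Set ℝ := {s : ℝ | 0 ≤ s ∧ ∃ C > (0 : ℝ), ∀ r R : ℝ, 0 < r → r ≤ R ^ (1 / θ) →
    R ^ (1 / θ) < R → R < 1 → 0 < R → ∀ x ∈ F,
    (coveringNumber r (closedBall x R ∩ F) : ℝ≥0∞) ≤ ENNReal.ofReal (C * (R / r) ^ s)} with hSUdef
  set SL : Set ℝ := {s : ℝ | 0 ≤ s ∧ ∃ C > (0 : ℝ), ∀ R : ℝ, 0 < R → R < 1 → ∀ x ∈ F,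
    (coveringNumber (R ^ (1 / θ)) (closedBall x R ∩ F) : ℝ≥0∞)
      ≤ ENNReal.ofReal (C * (R / R ^ (1 / θ)) ^ s)} with hSLdef
  have hRuR : ∀ R : ℝ, 0 < R → R < 1 → R ^ (1/θ) < R := by
    intro R hR0 hR1
    calc R ^ (1/θ) < R ^ (1:ℝ) := Real.rpow_lt_rpow_of_exponent_gt hR0 hR1 hu
      _ = R := Real.rpow_one R
  have hdSU : (d:ℝ) ∈ SU := by
    refine ⟨Nat.cast_nonneg d, ambC d, hamb, ?_⟩
    intro r R hr hrR hRu hR1 hR0 x hx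
    obtain ⟨t, htc, htcard⟩ := grid_cover x hr (hrR.trans hRu.le)
    apply coveringNumber_le_ofReal ((Set.inter_subset_left).trans htc)
    calc (t.card : ℝ) ≤ ambC d * (R/r) ^ d := htcard
      _ = ambC d * (R/r) ^ ((d:ℕ):ℝ) := by rw [Real.rpow_natCast]
  have hdSL : (d:ℝ) ∈ SL := by
    refine ⟨Nat.cast_nonneg d, ambC d, hamb, ?_⟩
    intro R hR0 hR1 x hx
    have hr : 0 < R ^ (1/θ) := Real.rpow_pos_of_pos hR0 _
    obtain ⟨t, htc, htcard⟩ := grid_cover x hr (hRuR R hR0 hR1).le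
    apply coveringNumber_le_ofReal ((Set.inter_subset_left).trans htc)
    calc (t.card : ℝ) ≤ ambC d * (R/(R ^ (1/θ))) ^ d := htcard
      _ = ambC d * (R/(R ^ (1/θ))) ^ ((d:ℕ):ℝ) := by rw [Real.rpow_natCast]
  have hbddSL : BddBelow SL := ⟨0, fun a ha => ha.1⟩
  have hbddSU : BddBelow SU := ⟨0, fun a ha => ha.1⟩
  have hsub : SU ⊆ SL := by
    rintro s ⟨hs0, C, hC, hP⟩
    refine ⟨hs0, C, hC, ?_⟩
    intro R hR0 hR1 x hx
    exact hP (R ^ (1/θ)) R (Real.rpow_pos_of_pos hR0 _) le_rfl (hRuR R hR0 hR1) hR1 hR0 x hx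
  have hLU : sInf SL ≤ sInf SU := csInf_le_csInf hbddSL ⟨(d:ℝ), hdSU⟩ hsub
  have hUd : sInf SU ≤ (d:ℝ) := csInf_le hbddSU hdSU
  constructor
  · intro h
    refine le_antisymm (h ▸ hLU) ?_
    by_contra hlt
    push_neg at hlt
    obtain ⟨s, hsSL, hsd⟩ := exists_lt_of_csInf_lt ⟨(d:ℝ), hdSL⟩ hlt
    obtain ⟨hs0, C, hC, H⟩ := hsSL
    set u : ℝ := 1/θ with hudef
    have hu0 : (0:ℝ) < u := by positivity
    have h1u : (0:ℝ) < 1 + u := by linarith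
    set s' : ℝ := (s + (d:ℝ) * u) / (1 + u) with hs'def
    have he : s' * (1 + u) = s + (d:ℝ) * u := by
      rw [hs'def]
      field_simp
    have hss' : s ≤ s' := by nlinarith
    have hds' : 0 < (d:ℝ) - s' := by nlinarith
    have hkey : ((d:ℝ) - s') * u ≤ s' - s := by nlinarith
    set ε : ℝ := ((d:ℝ) - s') / 2 with hεdef
    have hε : 0 < ε := by rw [hεdef]; linarith
    have hs''0 : 0 ≤ s' + ε := by linarith
    have hs''d : s' + ε ≤ (d:ℝ) := by rw [hεdef]; linarith
    obtain ⟨C₃, hC₃0, hcore⟩ := core_all hu hs0 hC H hss' hkey hε hs''0 hs''d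
    have hmem : (s' + ε) ∈ SU := by
      refine ⟨hs''0, C₃, hC₃0, ?_⟩
      intro r R hr hrR hRu hR1 hR0 x hx
      obtain ⟨T, hTc, hTcard⟩ := hcore r R hr hrR hR0 hR1 x hx
      exact coveringNumber_le_ofReal hTc hTcard
    have : sInf SU ≤ s' + ε := csInf_le hbddSU hmem
    rw [h] at this
    rw [hεdef] at this
    linarith
  · intro h
    refine le_antisymm hUd ?_
    calc (d:ℝ) = sInf SL := h.symm
      _ ≤ sInf SU := hLU
end
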